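/- The homothety f(x) = 2x on ℝ^d has the forward topological shadowing property: for every continuous ε : ℝ^d → (0,∞) there exists a continuous δ : ℝ^d → (0,∞) such that every δ-pseudo-orbit (xₙ)ₙ∈ℤ satisfies: there exists y ∈ ℝ^d with ‖fⁿ(y) − xₙ‖ ≤ ε(xₙ) for all n ≥ 0. -/

import Mathlib

open Metric Filter Topology

/-- `n`-fold composition of a homeomorphism, `n : ℕ`. -/
def hpow {X : Type*} [TopologicalSpace X] (f : X ≃ₜ X) : ℕ → X ≃ₜ X
  | 0 => Homeomorph.refl X
  | n + 1 => (hpow f n).trans f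

/-- `n`-th iterate of a homeomorphism, `n : ℤ` (negative powers use the inverse). -/
def hzpow {X : Type*} [TopologicalSpace X] (f : X ≃ₜ X) : ℤ → X ≃ₜ X
  | Int.ofNat n => hpow f n
  | Int.negSucc n => (hpow f (n + 1)).symm

/-- `(xₙ)ₙ∈ℤ` is a `δ`-pseudo-orbit for `f`: `d(f(xₙ), xₙ₊₁) < δ(f(xₙ))` for all `n`. -/
def IsPseudoOrbit {X : Type*} [MetricSpace X] (f : X → X) (δ : X → ℝ) (x : ℤ → X) : Prop :=
  ∀ n : ℤ, dist (f (x n)) (x (n + 1)) < δ (f (x n))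

/-- Topological shadowing property (strict shadowing inequality). -/
def TSP {X : Type*} [MetricSpace X] (f : X ≃ₜ X) : Prop :=
  ∀ ε : X → ℝ, Continuous ε → (∀ p, 0 < ε p) →
    ∃ δ : X → ℝ, Continuous δ ∧ (∀ p, 0 < δ p) ∧
      ∀ x : ℤ → X, IsPseudoOrbit f δ x →
        ∃ y : X, ∀ n : ℤ, dist (hzpow f n y) (x n) < ε (x n)



noncomputable def gg {d : ℕ} (E : EuclideanSpace ℝ (Fin d) → ℝ)
    (x : EuclideanSpace ℝ (Fin d)) : ℝ :=
  ⨅ z : EuclideanSpace ℝ (Fin d), (min 1 (E z) + ‖x - z‖)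

section aux
variable {d : ℕ} {E : EuclideanSpace ℝ (Fin d) → ℝ}

lemma gg_bdd (hE : ∀ p, 0 < E p) (x : EuclideanSpace ℝ (Fin d)) :
    BddBelow (Set.range fun z : EuclideanSpace ℝ (Fin d) => min 1 (E z) + ‖x - z‖) := by
  refine ⟨0, ?_⟩
  rintro _ ⟨z, rfl⟩
  exact add_nonneg (le_min one_pos.le (hE z).le) (norm_nonneg _)

lemma gg_nonneg (hE : ∀ p, 0 < E p) (x : EuclideanSpace ℝ (Fin d)) : 0 ≤ gg E x :=
  le_ciInf fun z => add_nonneg (le_min one_pos.le (hE z).le) (norm_nonneg _)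

lemma gg_le (hE : ∀ p, 0 < E p) (x : EuclideanSpace ℝ (Fin d)) : gg E x ≤ min 1 (E x) := by
  have := ciInf_le (gg_bdd hE x) x
  simpa [gg] using this

lemma gg_lip (hE : ∀ p, 0 < E p) (a b : EuclideanSpace ℝ (Fin d)) :
    gg E a ≤ gg E b + ‖a - b‖ := by
  rw [← sub_le_iff_le_add]
  refine le_ciInf fun z => ?_
  have h1 : gg E a ≤ min 1 (E z) + ‖a - z‖ := ciInf_le (gg_bdd hE a) z
  have h2 : ‖a - z‖ ≤ ‖a - b‖ + ‖b - z‖ := by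
    have := dist_triangle a b z
    simpa [dist_eq_norm] using this
  linarith

lemma gg_pos (hEc : Continuous E) (hE : ∀ p, 0 < E p) (x : EuclideanSpace ℝ (Fin d)) :
    0 < gg E x := by
  obtain ⟨z₀, hz₀m, hz₀⟩ := (isCompact_closedBall x 1).exists_isMinOn
    ⟨x, mem_closedBall_self one_pos.le⟩ ((continuous_const.min hEc).continuousOn)
  have hm : 0 < min (min 1 (E z₀)) 1 := lt_min (lt_min one_pos (hE z₀)) one_pos
  refine lt_of_lt_of_le hm (le_ciInf fun z => ?_)
  rcases le_or_gt ‖x - z‖ 1 with h | h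
  · have hz : z ∈ closedBall x 1 := by
      simpa [mem_closedBall, dist_comm, dist_eq_norm] using h
    have h3 : min 1 (E z₀) ≤ min 1 (E z) := isMinOn_iff.mp hz₀ z hz
    have := norm_nonneg (x - z)
    calc min (min 1 (E z₀)) 1 ≤ min 1 (E z₀) := min_le_left _ _
      _ ≤ min 1 (E z) + ‖x - z‖ := by linarith
  · calc min (min 1 (E z₀)) 1 ≤ 1 := min_le_right _ _
      _ ≤ min 1 (E z) + ‖x - z‖ := by
          have := le_min one_pos.le (hE z).le
          linarith

lemma gg_cont (hE : ∀ p, 0 < E p) : Continuous (gg E) := by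
  have : LipschitzWith 1 (gg E) := LipschitzWith.of_dist_le_mul fun a b => by
    rw [Real.dist_eq, NNReal.coe_one, one_mul, abs_sub_le_iff]
    have h1 := gg_lip hE a b
    have h2 := gg_lip hE b a
    have h3 : ‖a - b‖ = dist a b := (dist_eq_norm a b).symm
    have h4 : ‖b - a‖ = dist a b := by rw [dist_comm]; exact (dist_eq_norm b a).symm
    constructor <;> linarith
  exact this.continuous


noncomputable def del (E : EuclideanSpace ℝ (Fin d) → ℝ) (p : EuclideanSpace ℝ (Fin d)) : ℝ :=
  ⨅ j : ℕ, (3/2:ℝ)^j/16 * gg E ((1/2:ℝ)^(j+1) • p)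

lemma del_bdd (hE : ∀ p, 0 < E p) (p : EuclideanSpace ℝ (Fin d)) :
    BddBelow (Set.range fun j : ℕ => (3/2:ℝ)^j/16 * gg E ((1/2:ℝ)^(j+1) • p)) := by
  refine ⟨0, ?_⟩
  rintro _ ⟨j, rfl⟩
  exact mul_nonneg (by positivity) (gg_nonneg hE _)

lemma del_le (hE : ∀ p, 0 < E p) (p : EuclideanSpace ℝ (Fin d)) (j : ℕ) :
    del E p ≤ (3/2:ℝ)^j/16 * gg E ((1/2:ℝ)^(j+1) • p) :=
  ciInf_le (del_bdd hE p) j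

lemma del_nonneg (hE : ∀ p, 0 < E p) (p : EuclideanSpace ℝ (Fin d)) : 0 ≤ del E p :=
  le_ciInf fun j => mul_nonneg (by positivity) (gg_nonneg hE _)

lemma del_pos (hEc : Continuous E) (hE : ∀ p, 0 < E p) (p : EuclideanSpace ℝ (Fin d)) :
    0 < del E p := by
  obtain ⟨z₀, hz₀m, hz₀⟩ := (isCompact_closedBall (0 : EuclideanSpace ℝ (Fin d)) ‖p‖).exists_isMinOn
    ⟨0, mem_closedBall_self (norm_nonneg p)⟩ (gg_cont hE).continuousOn
  have h0 : 0 < gg E z₀ := gg_pos hEc hE z₀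
  refine lt_of_lt_of_le (show (0:ℝ) < gg E z₀ / 16 by linarith) (le_ciInf fun j => ?_)
  have hmem : (1/2:ℝ)^(j+1) • p ∈ closedBall (0 : EuclideanSpace ℝ (Fin d)) ‖p‖ := by
    rw [mem_closedBall, dist_zero_right, norm_smul, Real.norm_eq_abs,
      abs_of_pos (by positivity)]
    have h1 : ((1/2:ℝ))^(j+1) ≤ 1 := pow_le_one₀ (by norm_num) (by norm_num)
    nlinarith [norm_nonneg p]
  have h1 : gg E z₀ ≤ gg E ((1/2:ℝ)^(j+1) • p) := isMinOn_iff.mp hz₀ _ hmem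
  have h2 : (1:ℝ) ≤ (3/2:ℝ)^j := one_le_pow₀ (by norm_num)
  calc gg E z₀ / 16 = 1/16 * gg E z₀ := by ring
    _ ≤ (3/2:ℝ)^j/16 * gg E ((1/2:ℝ)^(j+1) • p) := by
        apply mul_le_mul (by linarith) h1 h0.le (by positivity)

lemma del_lip (hE : ∀ p, 0 < E p) (a b : EuclideanSpace ℝ (Fin d)) :
    del E a ≤ del E b + ‖a - b‖ := by
  rw [← sub_le_iff_le_add]
  refine le_ciInf fun j => ?_
  have h1 := del_le hE a j
  have h2 := gg_lip hE ((1/2:ℝ)^(j+1) • a) ((1/2:ℝ)^(j+1) • b)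
  have h3 : ‖(1/2:ℝ)^(j+1) • a - (1/2:ℝ)^(j+1) • b‖ = (1/2:ℝ)^(j+1) * ‖a - b‖ := by
    rw [← smul_sub, norm_smul, Real.norm_eq_abs, abs_of_pos (by positivity)]
  rw [h3] at h2
  have h4 : (3/2:ℝ)^j/16 * ((1/2:ℝ)^(j+1) * ‖a - b‖) ≤ ‖a - b‖ := by
    have e1 : (3/2:ℝ)^j * (1/2:ℝ)^(j+1) = (3/4:ℝ)^j * (1/2) := by
      rw [pow_succ, ← mul_assoc, ← mul_pow]; norm_num
    have h5 : (3/4:ℝ)^j ≤ 1 := pow_le_one₀ (by norm_num) (by norm_num)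
    have h6 : (0:ℝ) ≤ (3/4:ℝ)^j := by positivity
    have h7 := norm_nonneg (a - b)
    calc (3/2:ℝ)^j/16 * ((1/2:ℝ)^(j+1) * ‖a - b‖)
        = ((3/2:ℝ)^j * (1/2:ℝ)^(j+1)) / 16 * ‖a - b‖ := by ring
      _ = (3/4:ℝ)^j * (1/2) / 16 * ‖a - b‖ := by rw [e1]
      _ ≤ 1 * ‖a - b‖ := by nlinarith
      _ = ‖a - b‖ := one_mul _
  have h8 : (3/2:ℝ)^j/16 * gg E ((1/2:ℝ)^(j+1) • a)
      ≤ (3/2:ℝ)^j/16 * gg E ((1/2:ℝ)^(j+1) • b)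
        + (3/2:ℝ)^j/16 * ((1/2:ℝ)^(j+1) * ‖a - b‖) := by
    have hc : (0:ℝ) ≤ (3/2:ℝ)^j/16 := by positivity
    nlinarith [mul_le_mul_of_nonneg_left h2 hc]
  linarith

lemma del_cont (hE : ∀ p, 0 < E p) : Continuous (del E) := by
  have : LipschitzWith 1 (del E) := LipschitzWith.of_dist_le_mul fun a b => by
    rw [Real.dist_eq, NNReal.coe_one, one_mul, abs_sub_le_iff]
    have h1 := del_lip hE a b
    have h2 := del_lip hE b a
    have h3 : ‖a - b‖ = dist a b := (dist_eq_norm a b).symm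
    have h4 : ‖b - a‖ = dist a b := by rw [dist_comm]; exact (dist_eq_norm b a).symm
    constructor <;> linarith
  exact this.continuous


end aux

lemma hpow_smul {d : ℕ} (n : ℕ) (y : EuclideanSpace ℝ (Fin d)) :
    hpow (Homeomorph.smulOfNeZero (2:ℝ) two_ne_zero) n y = (2:ℝ)^n • y := by
  induction n with
  | zero => simp [hpow]
  | succ n ih =>
    have h1 : hpow (Homeomorph.smulOfNeZero (2:ℝ) two_ne_zero) (n+1) y
        = (Homeomorph.smulOfNeZero (2:ℝ) two_ne_zero)
            (hpow (Homeomorph.smulOfNeZero (2:ℝ) two_ne_zero) n y) := rfl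
    have h2 : ∀ z : EuclideanSpace ℝ (Fin d),
        (Homeomorph.smulOfNeZero (2:ℝ) two_ne_zero) z = (2:ℝ) • z := fun z => rfl
    rw [h1, ih, h2, smul_smul, ← pow_succ']

lemma hzpow_natCast {d : ℕ} (n : ℕ) (y : EuclideanSpace ℝ (Fin d)) :
    hzpow (Homeomorph.smulOfNeZero (2:ℝ) two_ne_zero) (n : ℤ) y = (2:ℝ)^n • y := by
  have : hzpow (Homeomorph.smulOfNeZero (2:ℝ) two_ne_zero) (n : ℤ) y
      = hpow (Homeomorph.smulOfNeZero (2:ℝ) two_ne_zero) n y := rfl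
  rw [this, hpow_smul]

/-- The homothety `x ↦ 2x` of `ℝ^d` has the forward topological shadowing property. -/
theorem homothety_forward_TSP (d : ℕ) :
    ∀ ε : EuclideanSpace ℝ (Fin d) → ℝ, Continuous ε → (∀ p, 0 < ε p) →
      ∃ δ : EuclideanSpace ℝ (Fin d) → ℝ, Continuous δ ∧ (∀ p, 0 < δ p) ∧
        ∀ x : ℤ → EuclideanSpace ℝ (Fin d),
          (∀ n : ℤ, ‖(2 : ℝ) • x n - x (n + 1)‖ < δ ((2 : ℝ) • x n)) →
          ∃ y : EuclideanSpace ℝ (Fin d),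
            ∀ n : ℕ, ‖(hzpow (Homeomorph.smulOfNeZero (2 : ℝ) two_ne_zero) n) y - x n‖ ≤ ε (x n) := by
  intro ε hεc hεp
  refine ⟨del ε, del_cont hεp, del_pos hεc hεp, ?_⟩
  intro x hx
  set G : EuclideanSpace ℝ (Fin d) → ℝ := gg ε with hGdef
  set s : ℕ → EuclideanSpace ℝ (Fin d) := fun k => (1/2:ℝ)^k • x k with hsdef
  have hsk : ∀ k : ℕ, s k = (1/2:ℝ)^k • x k := fun k => rfl
  have h2k : ∀ k : ℕ, (2:ℝ)^k * (1/2:ℝ)^k = 1 := fun k => by rw [← mul_pow]; norm_num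
  have hGnn : ∀ p, 0 ≤ G p := gg_nonneg hεp
  -- step estimate
  have hstep : ∀ k : ℕ, ‖s (k+1) - s k‖ ≤ (1/2:ℝ)^(k+1) * del ε ((2:ℝ) • x k) := by
    intro k
    have hcast : ((k:ℤ) + 1) = ((k+1 : ℕ) : ℤ) := by push_cast; ring
    have e : s (k+1) - s k = ((1/2:ℝ))^(k+1) • (x (k+1) - (2:ℝ) • x k) := by
      rw [hsk, hsk, smul_sub, smul_smul]
      congr 2
      rw [pow_succ]; ring
    rw [e, norm_smul, Real.norm_eq_abs, abs_of_pos (by positivity)]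
    have h := hx k
    rw [hcast, norm_sub_rev] at h
    exact mul_le_mul_of_nonneg_left h.le (by positivity)
  -- geometric sum bounds
  have hgeo : ∀ m : ℕ, (∑ i ∈ Finset.range m, (3/4:ℝ)^i) ≤ 4 := by
    intro m
    rw [geom_sum_eq (by norm_num : (3/4:ℝ) ≠ 1)]
    have h1 : (0:ℝ) ≤ (3/4:ℝ)^m := by positivity
    rw [div_le_iff_of_neg (by norm_num : (3/4:ℝ) - 1 < 0)]
    linarith
  have hgeonn : ∀ m : ℕ, 0 ≤ (∑ i ∈ Finset.range m, (3/4:ℝ)^i) :=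
    fun m => Finset.sum_nonneg fun i _ => by positivity
  -- main inductive estimate
  have main : ∀ n m : ℕ, ‖(2:ℝ)^n • s (n+m) - x n‖
      ≤ 3/64 * (∑ i ∈ Finset.range m, (3/4:ℝ)^i) * G (x n) := by
    intro n m
    induction m with
    | zero =>
      have e : (2:ℝ)^n • s (n+0) - x n = 0 := by
        rw [Nat.add_zero, hsk, smul_smul, h2k n, one_smul, sub_self]
      rw [e, norm_zero]
      simp
    | succ m ih =>
      have hAle : ‖(2:ℝ)^n • s (n+m) - x n‖ ≤ 3/16 * G (x n) := by
        calc ‖(2:ℝ)^n • s (n+m) - x n‖ ≤ 3/64 * (∑ i ∈ Finset.range m, (3/4:ℝ)^i) * G (x n) := ih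
          _ ≤ 3/64 * 4 * G (x n) := by
              apply mul_le_mul_of_nonneg_right _ (hGnn (x n))
              nlinarith [hgeo m]
          _ = 3/16 * G (x n) := by ring
      have hGA : G ((2:ℝ)^n • s (n+m)) ≤ 3/2 * G (x n) := by
        have h := gg_lip hεp ((2:ℝ)^n • s (n+m)) (x n)
        have := hGnn (x n)
        rw [← hGdef] at h
        linarith
      have hpt : ((1/2:ℝ))^(m+1) • ((2:ℝ) • x ((n+m : ℕ) : ℤ)) = (2:ℝ)^n • s (n+m) := by
        rw [hsk, smul_smul, smul_smul]
        congr 1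
        rw [pow_succ, pow_add]
        linear_combination (-(1:ℝ)) * (1/2:ℝ)^m * h2k n
      have hD : del ε ((2:ℝ) • x ((n+m : ℕ) : ℤ)) ≤ (3/2:ℝ)^m/16 * (3/2 * G (x n)) := by
        have h1 := del_le hεp ((2:ℝ) • x ((n+m : ℕ) : ℤ)) m
        rw [hpt] at h1
        calc del ε ((2:ℝ) • x ((n+m : ℕ) : ℤ)) ≤ (3/2:ℝ)^m/16 * G ((2:ℝ)^n • s (n+m)) := h1
          _ ≤ (3/2:ℝ)^m/16 * (3/2 * G (x n)) :=
              mul_le_mul_of_nonneg_left hGA (by positivity)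
      have hsplit : (2:ℝ)^n • s (n+(m+1)) - x n
          = (2:ℝ)^n • (s ((n+m)+1) - s (n+m)) + ((2:ℝ)^n • s (n+m) - x n) := by
        have e : n+(m+1) = (n+m)+1 := by ring
        rw [e, smul_sub]
        abel
      rw [hsplit]
      have e2 : (2:ℝ)^n * (1/2:ℝ)^((n+m)+1) = (1/2:ℝ)^(m+1) := by
        have : ((1/2:ℝ))^((n+m)+1) = (1/2:ℝ)^n * (1/2:ℝ)^(m+1) := by
          rw [← pow_add, Nat.add_assoc]
        rw [this, ← mul_assoc, h2k n, one_mul]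
      have hterm : ‖(2:ℝ)^n • (s ((n+m)+1) - s (n+m))‖ ≤ (3/4:ℝ)^m * (3/64) * G (x n) := by
        rw [norm_smul, Real.norm_eq_abs, abs_of_pos (by positivity)]
        calc (2:ℝ)^n * ‖s ((n+m)+1) - s (n+m)‖
            ≤ (2:ℝ)^n * ((1/2:ℝ)^((n+m)+1) * del ε ((2:ℝ) • x ((n+m : ℕ) : ℤ))) :=
              mul_le_mul_of_nonneg_left (hstep (n+m)) (by positivity)
          _ = (1/2:ℝ)^(m+1) * del ε ((2:ℝ) • x ((n+m : ℕ) : ℤ)) := by rw [← mul_assoc, e2]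
          _ ≤ (1/2:ℝ)^(m+1) * ((3/2:ℝ)^m/16 * (3/2 * G (x n))) :=
              mul_le_mul_of_nonneg_left hD (by positivity)
          _ = (3/4:ℝ)^m * (3/64) * G (x n) := by
              have e3 : (1/2:ℝ)^(m+1) * (3/2:ℝ)^m = (3/4:ℝ)^m * (1/2) := by
                have e4 : (1/2:ℝ)^m * (3/2:ℝ)^m = (3/4:ℝ)^m := by
                  rw [← mul_pow]; norm_num
                rw [pow_succ]
                linear_combination (1/2:ℝ) * e4
              calc (1/2:ℝ)^(m+1) * ((3/2:ℝ)^m/16 * (3/2 * G (x n)))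
                  = ((1/2:ℝ)^(m+1) * (3/2:ℝ)^m) * (3/32 * G (x n)) := by ring
                _ = ((3/4:ℝ)^m * (1/2)) * (3/32 * G (x n)) := by rw [e3]
                _ = (3/4:ℝ)^m * (3/64) * G (x n) := by ring
      calc ‖(2:ℝ)^n • (s ((n+m)+1) - s (n+m)) + ((2:ℝ)^n • s (n+m) - x n)‖
          ≤ ‖(2:ℝ)^n • (s ((n+m)+1) - s (n+m))‖ + ‖(2:ℝ)^n • s (n+m) - x n‖ := norm_add_le _ _
        _ ≤ (3/4:ℝ)^m * (3/64) * G (x n)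
            + 3/64 * (∑ i ∈ Finset.range m, (3/4:ℝ)^i) * G (x n) := add_le_add hterm ih
        _ = 3/64 * (∑ i ∈ Finset.range (m+1), (3/4:ℝ)^i) * G (x n) := by
            rw [Finset.sum_range_succ]; ring
  -- Cauchy
  have hDle : ∀ k : ℕ, del ε ((2:ℝ) • x k) ≤ 1/16 := by
    intro k
    have h1 := del_le hεp ((2:ℝ) • x k) 0
    have hpt : ((1/2:ℝ))^(0+1) • ((2:ℝ) • x k) = x k := by
      rw [smul_smul]; norm_num
    rw [hpt] at h1
    have h2 : G (x k) ≤ 1 := le_trans (gg_le hεp (x k)) (min_le_left _ _)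
    have h3 := hGnn (x k)
    calc del ε ((2:ℝ) • x k) ≤ (3/2:ℝ)^0/16 * G (x k) := h1
      _ ≤ 1/16 := by rw [pow_zero]; linarith
  have hcauchy : CauchySeq s := by
    apply cauchySeq_of_le_geometric (1/2:ℝ) (1/16) (by norm_num)
    intro k
    rw [dist_eq_norm, norm_sub_rev]
    calc ‖s (k+1) - s k‖ ≤ (1/2:ℝ)^(k+1) * del ε ((2:ℝ) • x k) := hstep k
      _ ≤ (1/2:ℝ)^(k+1) * (1/16) := mul_le_mul_of_nonneg_left (hDle k) (by positivity)
      _ ≤ 1/16 * (1/2:ℝ)^k := by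
          rw [pow_succ]
          have := pow_pos (show (0:ℝ) < 1/2 by norm_num) k
          nlinarith
  obtain ⟨y, hy⟩ := cauchySeq_tendsto_of_complete hcauchy
  refine ⟨y, fun n => ?_⟩
  rw [hzpow_natCast]
  have ht : Tendsto (fun k => ‖(2:ℝ)^n • s k - x (n:ℤ)‖) atTop
      (𝓝 ‖(2:ℝ)^n • y - x (n:ℤ)‖) :=
    ((hy.const_smul ((2:ℝ)^n)).sub tendsto_const_nhds).norm
  have hev : ∀ᶠ k in atTop, ‖(2:ℝ)^n • s k - x (n:ℤ)‖ ≤ 3/16 * G (x (n:ℤ)) := by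
    filter_upwards [eventually_ge_atTop n] with k hk
    obtain ⟨m, rfl⟩ := Nat.exists_eq_add_of_le hk
    calc ‖(2:ℝ)^n • s (n+m) - x (n:ℤ)‖
        ≤ 3/64 * (∑ i ∈ Finset.range m, (3/4:ℝ)^i) * G (x (n:ℤ)) := main n m
      _ ≤ 3/64 * 4 * G (x (n:ℤ)) := by
          apply mul_le_mul_of_nonneg_right _ (hGnn _)
          nlinarith [hgeo m]
      _ = 3/16 * G (x (n:ℤ)) := by ring
  have hfin := le_of_tendsto ht hev
  have h2 : G (x (n:ℤ)) ≤ ε (x (n:ℤ)) := le_trans (gg_le hεp _) (min_le_right _ _)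
  have h3 := hGnn (x (n:ℤ))
  linarith
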